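/- Let 0 < α < ∞ and φ be a holomorphic self-map of D. Then C_φ : HB₀(α) → HB₀(α) is bounded if and only if φ belongs to the holomorphic little α-Bloch space B₀(α) and sup_{z∈D} (1-|z|²)^α |φ'(z)| / (1-|φ(z)|²)^α < ∞. -/

import Mathlib

open Complex Metric Set Filter Topology

noncomputable section

/-- The open unit disk in ℂ. -/
def unitDisk : Set ℂ := Metric.ball 0 1

/-- Wirtinger derivative f_z = (1/2)(f_x - i f_y). -/
def wZ (f : ℂ → ℂ) (z : ℂ) : ℂ :=
  (1/2) * (fderiv ℝ f z 1 - Complex.I * fderiv ℝ f z Complex.I)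

/-- Wirtinger derivative f_z̄ = (1/2)(f_x + i f_y). -/
def wZbar (f : ℂ → ℂ) (z : ℂ) : ℂ :=
  (1/2) * (fderiv ℝ f z 1 + Complex.I * fderiv ℝ f z Complex.I)

/-- f is harmonic on the disk: canonical decomposition f = h + conj g with h, g holomorphic. -/
def HarmonicDisk (f : ℂ → ℂ) : Prop :=
  ∃ h g : ℂ → ℂ, DifferentiableOn ℂ h unitDisk ∧ DifferentiableOn ℂ g unitDisk ∧
    ∀ z ∈ unitDisk, f z = h z + (starRingEnd ℂ) (g z)

/-- The weight (1-|z|²)^α (|f_z(z)| + |f_z̄(z)|). -/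
def weight (α : ℝ) (f : ℂ → ℂ) (z : ℂ) : ℝ :=
  (1 - ‖z‖ ^ 2) ^ α * (‖wZ f z‖ + ‖wZbar f z‖)

/-- The Bloch seminorm sup_{z ∈ D} weight α f z. -/
def semiNorm (α : ℝ) (f : ℂ → ℂ) : ℝ := sSup (weight α f '' unitDisk)

/-- The HB(α) norm. -/
def HBnorm (α : ℝ) (f : ℂ → ℂ) : ℝ := ‖f 0‖ + semiNorm α f

/-- Membership in the harmonic α-Bloch space HB(α). -/
def memHB (α : ℝ) (f : ℂ → ℂ) : Prop :=
  HarmonicDisk f ∧ BddAbove (weight α f '' unitDisk)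

/-- The little-oh condition: weight α f z → 0 as |z| → 1. -/
def littleOh (α : ℝ) (f : ℂ → ℂ) : Prop :=
  ∀ ε > 0, ∃ r < (1:ℝ), ∀ z ∈ unitDisk, r < ‖z‖ → weight α f z < ε

/-- Membership in the harmonic little α-Bloch space HB₀(α). -/
def memHB0 (α : ℝ) (f : ℂ → ℂ) : Prop := memHB α f ∧ littleOh α f

/-- τ_{φ,α}(z) = (1-|z|²)^α |φ'(z)| / (1-|φ(z)|²)^α. -/
def tau (α : ℝ) (φ : ℂ → ℂ) (z : ℂ) : ℝ :=
  (1 - ‖z‖ ^ 2) ^ α * ‖deriv φ z‖ / (1 - ‖φ z‖ ^ 2) ^ α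

lemma wZ_congr {f₁ f₂ : ℂ → ℂ} {z : ℂ} (h : f₁ =ᶠ[nhds z] f₂) : wZ f₁ z = wZ f₂ z := by
  unfold wZ; rw [h.fderiv_eq]

lemma wZbar_congr {f₁ f₂ : ℂ → ℂ} {z : ℂ} (h : f₁ =ᶠ[nhds z] f₂) : wZbar f₁ z = wZbar f₂ z := by
  unfold wZbar; rw [h.fderiv_eq]

lemma fderivR_of_holo {h : ℂ → ℂ} {z : ℂ} (hd : DifferentiableAt ℂ h z) (v : ℂ) :
    fderiv ℝ h z v = deriv h z * v := by
  rw [(hd.hasFDerivAt.restrictScalars ℝ).fderiv]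
  simp only [ContinuousLinearMap.coe_restrictScalars']
  calc (fderiv ℂ h z) v = (fderiv ℂ h z) (v • 1) := by rw [smul_eq_mul, mul_one]
    _ = v • (fderiv ℂ h z) 1 := map_smul _ _ _
    _ = deriv h z * v := by rw [fderiv_apply_one_eq_deriv, smul_eq_mul, mul_comm]

lemma wZ_holo {h : ℂ → ℂ} {z : ℂ} (hd : DifferentiableAt ℂ h z) : wZ h z = deriv h z := by
  unfold wZ; rw [fderivR_of_holo hd, fderivR_of_holo hd]; ring_nf
  rw [Complex.I_sq]; ring

lemma wZbar_holo {h : ℂ → ℂ} {z : ℂ} (hd : DifferentiableAt ℂ h z) : wZbar h z = 0 := by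
  unfold wZbar; rw [fderivR_of_holo hd, fderivR_of_holo hd]; ring_nf
  rw [Complex.I_sq]; ring

lemma fderivR_conj {g : ℂ → ℂ} {z : ℂ} (hd : DifferentiableAt ℂ g z) (v : ℂ) :
    fderiv ℝ (fun x => (starRingEnd ℂ) (g x)) z v = (starRingEnd ℂ) (deriv g z * v) := by
  have : (fun x => (starRingEnd ℂ) (g x)) = (⇑Complex.conjCLE ∘ g) := rfl
  rw [this, ContinuousLinearEquiv.comp_fderiv]
  simp only [ContinuousLinearMap.coe_comp', Function.comp_apply]
  rw [fderivR_of_holo hd]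
  rfl

lemma wZ_conj {g : ℂ → ℂ} {z : ℂ} (hd : DifferentiableAt ℂ g z) :
    wZ (fun x => (starRingEnd ℂ) (g x)) z = 0 := by
  unfold wZ; rw [fderivR_conj hd, fderivR_conj hd]
  simp only [map_mul, Complex.conj_I, map_one]
  ring_nf
  rw [Complex.I_sq]; ring

lemma wZbar_conj {g : ℂ → ℂ} {z : ℂ} (hd : DifferentiableAt ℂ g z) :
    wZbar (fun x => (starRingEnd ℂ) (g x)) z = (starRingEnd ℂ) (deriv g z) := by
  unfold wZbar; rw [fderivR_conj hd, fderivR_conj hd]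
  simp only [map_mul, Complex.conj_I, map_one]
  ring_nf
  rw [Complex.I_sq]; ring

lemma isOpen_unitDisk : IsOpen unitDisk := isOpen_ball

lemma zero_mem_unitDisk : (0:ℂ) ∈ unitDisk := by simp [unitDisk]

lemma abs_lt_one {z : ℂ} (hz : z ∈ unitDisk) : ‖z‖ < 1 := by
  simpa [unitDisk] using mem_ball_zero_iff.mp hz

lemma mem_unitDisk_iff {z : ℂ} : z ∈ unitDisk ↔ ‖z‖ < 1 := by
  simp [unitDisk, mem_ball_zero_iff]

lemma one_sub_sq_pos {z : ℂ} (hz : z ∈ unitDisk) : 0 < 1 - ‖z‖ ^ 2 := by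
  have := abs_lt_one hz
  nlinarith [norm_nonneg z]

/-- Wirtinger derivatives of a function with a harmonic representation. -/
lemma rep_w {h g f : ℂ → ℂ} {z : ℂ} (hz : z ∈ unitDisk)
    (hh : DifferentiableOn ℂ h unitDisk) (hg : DifferentiableOn ℂ g unitDisk)
    (hfe : ∀ x ∈ unitDisk, f x = h x + (starRingEnd ℂ) (g x)) :
    wZ f z = deriv h z ∧ wZbar f z = (starRingEnd ℂ) (deriv g z) := by
  have hhd : DifferentiableAt ℂ h z := hh.differentiableAt (isOpen_unitDisk.mem_nhds hz)
  have hgd : DifferentiableAt ℂ g z := hg.differentiableAt (isOpen_unitDisk.mem_nhds hz)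
  have hev : f =ᶠ[nhds z] (fun x => h x + (starRingEnd ℂ) (g x)) :=
    Filter.eventually_of_mem (isOpen_unitDisk.mem_nhds hz) hfe
  have hd1 : DifferentiableAt ℝ h z := hhd.restrictScalars ℝ
  have hd2 : DifferentiableAt ℝ (fun x => (starRingEnd ℂ) (g x)) z := by
    exact Complex.conjCLE.differentiableAt.comp z (hgd.restrictScalars ℝ)
  have hfd : fderiv ℝ (fun x => h x + (starRingEnd ℂ) (g x)) z
      = fderiv ℝ h z + fderiv ℝ (fun x => (starRingEnd ℂ) (g x)) z := fderiv_add hd1 hd2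
  constructor
  · rw [wZ_congr hev]
    unfold wZ
    rw [hfd]
    simp only [ContinuousLinearMap.add_apply]
    have e1 := wZ_holo hhd
    have e2 := wZ_conj hgd
    unfold wZ at e1 e2
    have : ∀ a b c d : ℂ, (1/2)*((a+c) - Complex.I*(b+d)) = (1/2)*(a - Complex.I*b) + (1/2)*(c - Complex.I*d) := by intros; ring
    rw [this, e1, e2, add_zero]
  · rw [wZbar_congr hev]
    unfold wZbar
    rw [hfd]
    simp only [ContinuousLinearMap.add_apply]
    have e1 := wZbar_holo hhd
    have e2 := wZbar_conj hgd
    unfold wZbar at e1 e2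
    have : ∀ a b c d : ℂ, (1/2)*((a+c) + Complex.I*(b+d)) = (1/2)*(a + Complex.I*b) + (1/2)*(c + Complex.I*d) := by intros; ring
    rw [this, e1, e2, zero_add]

lemma weight_rep {α : ℝ} {h g f : ℂ → ℂ} {z : ℂ} (hz : z ∈ unitDisk)
    (hh : DifferentiableOn ℂ h unitDisk) (hg : DifferentiableOn ℂ g unitDisk)
    (hfe : ∀ x ∈ unitDisk, f x = h x + (starRingEnd ℂ) (g x)) :
    weight α f z = (1 - ‖z‖ ^ 2) ^ α * (‖deriv h z‖ + ‖deriv g z‖) := by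
  obtain ⟨e1, e2⟩ := rep_w hz hh hg hfe
  unfold weight
  rw [e1, e2, Complex.norm_conj]

lemma weight_holo {α : ℝ} {h : ℂ → ℂ} {z : ℂ} (hz : z ∈ unitDisk)
    (hh : DifferentiableOn ℂ h unitDisk) :
    weight α h z = (1 - ‖z‖ ^ 2) ^ α * ‖deriv h z‖ := by
  have := weight_rep (α := α) (g := fun _ => 0) (f := h) hz hh (differentiableOn_const 0) (by intro x _; simp)
  simpa using this

lemma weight_nonneg {α : ℝ} {f : ℂ → ℂ} {z : ℂ} (hz : z ∈ unitDisk) : 0 ≤ weight α f z := by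
  unfold weight
  have := one_sub_sq_pos hz
  positivity

lemma semiNorm_nonneg {α : ℝ} {f : ℂ → ℂ} (hb : BddAbove (weight α f '' unitDisk)) :
    0 ≤ semiNorm α f :=
  le_trans (weight_nonneg zero_mem_unitDisk) (le_csSup hb ⟨0, zero_mem_unitDisk, rfl⟩)

lemma weight_le_semiNorm {α : ℝ} {f : ℂ → ℂ} {z : ℂ} (hz : z ∈ unitDisk)
    (hb : BddAbove (weight α f '' unitDisk)) : weight α f z ≤ semiNorm α f :=
  le_csSup hb ⟨z, hz, rfl⟩

lemma HBnorm_nonneg {α : ℝ} {f : ℂ → ℂ} (hb : BddAbove (weight α f '' unitDisk)) :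
    0 ≤ HBnorm α f :=
  add_nonneg (norm_nonneg _) (semiNorm_nonneg hb)

/-- Chain rule for the weight. -/
lemma weight_comp {α : ℝ} {h g f φ : ℂ → ℂ} {z : ℂ} (hz : z ∈ unitDisk)
    (hφd : DifferentiableOn ℂ φ unitDisk) (hφm : MapsTo φ unitDisk unitDisk)
    (hh : DifferentiableOn ℂ h unitDisk) (hg : DifferentiableOn ℂ g unitDisk)
    (hfe : ∀ x ∈ unitDisk, f x = h x + (starRingEnd ℂ) (g x)) :
    weight α (f ∘ φ) z = tau α φ z * weight α f (φ z) := by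
  have hw : φ z ∈ unitDisk := hφm hz
  have hφz : DifferentiableAt ℂ φ z := hφd.differentiableAt (isOpen_unitDisk.mem_nhds hz)
  have hhw : DifferentiableAt ℂ h (φ z) := hh.differentiableAt (isOpen_unitDisk.mem_nhds hw)
  have hgw : DifferentiableAt ℂ g (φ z) := hg.differentiableAt (isOpen_unitDisk.mem_nhds hw)
  have hhc : DifferentiableOn ℂ (h ∘ φ) unitDisk := hh.comp hφd hφm
  have hgc : DifferentiableOn ℂ (g ∘ φ) unitDisk := hg.comp hφd hφm
  have hfc : ∀ x ∈ unitDisk, (f ∘ φ) x = (h ∘ φ) x + (starRingEnd ℂ) ((g ∘ φ) x) := by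
    intro x hx; exact hfe (φ x) (hφm hx)
  rw [weight_rep hz hhc hgc hfc, weight_rep hw hh hg hfe]
  rw [(hhw.hasDerivAt.comp z hφz.hasDerivAt).deriv, (hgw.hasDerivAt.comp z hφz.hasDerivAt).deriv]
  unfold tau
  have hc : (0:ℝ) < (1 - ‖φ z‖^2)^α := Real.rpow_pos_of_pos (one_sub_sq_pos hw) α
  rw [norm_mul, norm_mul]
  field_simp


lemma tau_nonneg {α : ℝ} {φ : ℂ → ℂ} {z : ℂ} (hz : z ∈ unitDisk) (hw : φ z ∈ unitDisk) :
    0 ≤ tau α φ z := by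
  unfold tau
  apply div_nonneg
  · have := one_sub_sq_pos hz
    positivity
  · exact (Real.rpow_pos_of_pos (one_sub_sq_pos hw) α).le

/-- (1-|z|²)^α → 0 as |z| → 1. -/
lemma small_pow (α : ℝ) (hα : 0 < α) : ∀ ε > 0, ∃ r < (1:ℝ), ∀ z ∈ unitDisk,
    r < ‖z‖ → (1 - ‖z‖ ^ 2) ^ α < ε := by
  intro ε hε
  set δ : ℝ := min (1/2) ((ε/2) ^ α⁻¹) with hδdef
  have hδpos : 0 < δ := lt_min (by norm_num) (Real.rpow_pos_of_pos (by linarith) _)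
  have hδle : δ ≤ 1/2 := min_le_left _ _
  have hδα : δ ^ α ≤ ε/2 := by
    calc δ ^ α ≤ ((ε/2) ^ α⁻¹) ^ α :=
          Real.rpow_le_rpow (le_of_lt hδpos) (min_le_right _ _) (le_of_lt hα)
      _ = ε/2 := Real.rpow_inv_rpow (by linarith) (ne_of_gt hα)
  refine ⟨Real.sqrt (1 - δ), ?_, ?_⟩
  · have h1 : Real.sqrt (1-δ) < Real.sqrt 1 := Real.sqrt_lt_sqrt (by linarith) (by linarith)
    simpa using h1
  · intro z hz hrz
    have h1 : 1 - δ < ‖z‖ ^ 2 := by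
      have h0 : 0 ≤ 1 - δ := by linarith
      calc 1 - δ = Real.sqrt (1-δ) ^ 2 := (Real.sq_sqrt h0).symm
        _ < ‖z‖ ^ 2 := by
            apply sq_lt_sq' _ hrz
            have := Real.sqrt_nonneg (1-δ)
            have := norm_nonneg z
            linarith
    have h2 : 1 - ‖z‖ ^ 2 < δ := by linarith
    calc (1 - ‖z‖ ^ 2) ^ α < δ ^ α :=
          Real.rpow_lt_rpow (le_of_lt (one_sub_sq_pos hz)) h2 hα
      _ ≤ ε/2 := hδα
      _ < ε := by linarith

/-- A holomorphic function on the disk with bounded derivative is in HB₀(α). -/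
lemma memHB0_of_bounded_deriv {α : ℝ} (hα : 0 < α) {h : ℂ → ℂ} {D : ℝ}
    (hh : DifferentiableOn ℂ h unitDisk)
    (hD : ∀ z ∈ unitDisk, ‖deriv h z‖ ≤ D) : memHB0 α h := by
  have hD0 : 0 ≤ D := le_trans (norm_nonneg _) (hD 0 zero_mem_unitDisk)
  have hb : ∀ z ∈ unitDisk, weight α h z ≤ D := by
    intro z hz
    rw [weight_holo hz hh]
    calc (1 - ‖z‖ ^ 2) ^ α * ‖deriv h z‖
        ≤ 1 * D := by
          apply mul_le_mul _ (hD z hz) (norm_nonneg _) zero_le_one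
          exact Real.rpow_le_one (le_of_lt (one_sub_sq_pos hz))
            (by nlinarith [norm_nonneg z]) (le_of_lt hα)
      _ = D := one_mul D
  refine ⟨⟨⟨h, fun _ => 0, hh, differentiableOn_const 0, by intro x _; simp⟩, ?_⟩, ?_⟩
  · exact ⟨D, by rintro _ ⟨z, hz, rfl⟩; exact hb z hz⟩
  · intro ε hε
    obtain ⟨r, hr1, hr⟩ := small_pow α hα (ε / (D+1)) (by positivity)
    refine ⟨r, hr1, fun z hz hrz => ?_⟩
    rw [weight_holo hz hh]
    calc (1 - ‖z‖ ^ 2) ^ α * ‖deriv h z‖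
        ≤ (1 - ‖z‖ ^ 2) ^ α * D := by
          apply mul_le_mul_of_nonneg_left (hD z hz)
          exact Real.rpow_nonneg (le_of_lt (one_sub_sq_pos hz)) α
      _ ≤ (1 - ‖z‖ ^ 2) ^ α * (D+1) := by
          apply mul_le_mul_of_nonneg_left (by linarith)
          exact Real.rpow_nonneg (le_of_lt (one_sub_sq_pos hz)) α
      _ < (ε / (D+1)) * (D+1) :=
          mul_lt_mul_of_pos_right (hr z hz hrz) (by linarith)
      _ = ε := by field_simp

/-- Growth estimate via the mean value inequality. -/
lemma growth_bound {α : ℝ} (hα : 0 < α) {f h g : ℂ → ℂ}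
    (hh : DifferentiableOn ℂ h unitDisk) (hg : DifferentiableOn ℂ g unitDisk)
    (hfe : ∀ x ∈ unitDisk, f x = h x + (starRingEnd ℂ) (g x))
    (hb : BddAbove (weight α f '' unitDisk)) {w : ℂ} (hw : w ∈ unitDisk) :
    ‖f w‖ ≤ ‖f 0‖
      + semiNorm α f * ‖w‖ / (1 - ‖w‖ ^ 2) ^ α := by
  set s : Set ℂ := Metric.closedBall 0 (‖w‖) with hs
  have hsub : s ⊆ unitDisk := by
    intro x hx
    rw [mem_unitDisk_iff]
    have : ‖x‖ ≤ ‖w‖ := by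
      simpa using mem_closedBall_zero_iff.mp hx
    exact lt_of_le_of_lt this (abs_lt_one hw)
  have hcw : (0:ℝ) < (1 - ‖w‖ ^ 2) ^ α :=
    Real.rpow_pos_of_pos (one_sub_sq_pos hw) α
  set C : ℝ := semiNorm α f / (1 - ‖w‖ ^ 2) ^ α with hC
  have hS : 0 ≤ semiNorm α f := semiNorm_nonneg hb
  have hdiff : ∀ x ∈ s, DifferentiableAt ℝ f x := by
    intro x hx
    have hxD := hsub hx
    have hev : f =ᶠ[nhds x] (fun y => h y + (starRingEnd ℂ) (g y)) :=
      Filter.eventually_of_mem (isOpen_unitDisk.mem_nhds hxD) hfe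
    apply hev.differentiableAt_iff.mpr
    exact ((hh.differentiableAt (isOpen_unitDisk.mem_nhds hxD)).restrictScalars ℝ).add
      (Complex.conjCLE.differentiableAt.comp x
        ((hg.differentiableAt (isOpen_unitDisk.mem_nhds hxD)).restrictScalars ℝ))
  have hbound : ∀ x ∈ s, ‖fderiv ℝ f x‖ ≤ C := by
    intro x hx
    have hxD := hsub hx
    have hhd : DifferentiableAt ℂ h x := hh.differentiableAt (isOpen_unitDisk.mem_nhds hxD)
    have hgd : DifferentiableAt ℂ g x := hg.differentiableAt (isOpen_unitDisk.mem_nhds hxD)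
    have hev : f =ᶠ[nhds x] (fun y => h y + (starRingEnd ℂ) (g y)) :=
      Filter.eventually_of_mem (isOpen_unitDisk.mem_nhds hxD) hfe
    have hsum : ‖deriv h x‖ + ‖deriv g x‖ ≤ C := by
      have hwx : weight α f x ≤ semiNorm α f := weight_le_semiNorm hxD hb
      rw [weight_rep hxD hh hg hfe] at hwx
      have hcx : (0:ℝ) < (1 - ‖x‖ ^ 2) ^ α :=
        Real.rpow_pos_of_pos (one_sub_sq_pos hxD) α
      have hmono : (1 - ‖w‖ ^ 2) ^ α ≤ (1 - ‖x‖ ^ 2) ^ α := by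
        apply Real.rpow_le_rpow (le_of_lt (one_sub_sq_pos hw)) _ (le_of_lt hα)
        have : ‖x‖ ≤ ‖w‖ := by
          simpa using mem_closedBall_zero_iff.mp hx
        nlinarith [norm_nonneg x, norm_nonneg w]
      rw [hC, le_div_iff₀ hcw]
      have hsx : (0:ℝ) ≤ ‖deriv h x‖ + ‖deriv g x‖ := by positivity
      nlinarith [hwx, hmono, hsx, hcw]
    apply ContinuousLinearMap.opNorm_le_bound _ (le_trans (by positivity) hsum)
    intro v
    rw [hev.fderiv_eq]
    have hd1 : DifferentiableAt ℝ h x := hhd.restrictScalars ℝ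
    have hd2 : DifferentiableAt ℝ (fun y => (starRingEnd ℂ) (g y)) x :=
      Complex.conjCLE.differentiableAt.comp x (hgd.restrictScalars ℝ)
    rw [show fderiv ℝ (fun y => h y + (starRingEnd ℂ) (g y)) x = _ from fderiv_add hd1 hd2]
    simp only [ContinuousLinearMap.add_apply]
    calc ‖fderiv ℝ h x v + fderiv ℝ (fun y => (starRingEnd ℂ) (g y)) x v‖
        ≤ ‖fderiv ℝ h x v‖ + ‖fderiv ℝ (fun y => (starRingEnd ℂ) (g y)) x v‖ := norm_add_le _ _
      _ = ‖deriv h x * v‖ + ‖deriv g x * v‖ := by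
          rw [fderivR_of_holo hhd, fderivR_conj hgd]
          simp
      _ = (‖deriv h x‖ + ‖deriv g x‖) * ‖v‖ := by
          rw [norm_mul, norm_mul]; ring
      _ ≤ C * ‖v‖ := mul_le_mul_of_nonneg_right hsum (norm_nonneg v)
  have hmvt := Convex.norm_image_sub_le_of_norm_fderiv_le (x := (0:ℂ)) (y := w)
    hdiff hbound (convex_closedBall (0:ℂ) (‖w‖))
    (mem_closedBall_self (norm_nonneg w))
    (mem_closedBall_zero_iff.mpr (by simp))
  have h1 : ‖f w - f 0‖ ≤ C * ‖w‖ := by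
    simpa using hmvt
  have h2 : ‖f w‖ - ‖f 0‖ ≤ ‖f w - f 0‖ := by
    have := norm_sub_norm_le (f w) (f 0)
    simpa using this
  have hCC : C * ‖w‖ = semiNorm α f * ‖w‖ / (1 - ‖w‖ ^ 2) ^ α := by
    rw [hC]; ring
  linarith

/-- Test function for the necessity of the tau bound. -/
def testF (α : ℝ) (w : ℂ) : ℂ → ℂ := fun z =>
  ((1:ℂ) - (‖w‖ : ℂ)^2) * Complex.exp (-(α:ℂ) * Complex.log (1 - (starRingEnd ℂ) w * z))

lemma u_facts {w z : ℂ} (hw : w ∈ unitDisk) (hz : z ∈ unitDisk) :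
    0 < ‖1 - (starRingEnd ℂ) w * z‖ ∧
    (1 - (starRingEnd ℂ) w * z) ∈ Complex.slitPlane ∧
    1 - ‖w‖ ≤ ‖1 - (starRingEnd ℂ) w * z‖ ∧
    1 - ‖z‖ ^ 2 ≤ 2 * ‖1 - (starRingEnd ℂ) w * z‖ := by
  have hw1 := abs_lt_one hw
  have hz1 := abs_lt_one hz
  have hw0 := norm_nonneg w
  have hz0 := norm_nonneg z
  have habs : ‖(starRingEnd ℂ) w * z‖ = ‖w‖ * ‖z‖ := by
    rw [norm_mul, Complex.norm_conj]
  have hlt : ‖(starRingEnd ℂ) w * z‖ < 1 := by rw [habs]; nlinarith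
  have hre : 0 < (1 - (starRingEnd ℂ) w * z).re := by
    have := Complex.abs_re_le_norm ((starRingEnd ℂ) w * z)
    simp only [Complex.sub_re, Complex.one_re]
    have : ((starRingEnd ℂ) w * z).re ≤ ‖(starRingEnd ℂ) w * z‖ :=
      le_trans (le_abs_self _) this
    linarith
  have hslit : (1 - (starRingEnd ℂ) w * z) ∈ Complex.slitPlane := Or.inl hre
  have hlb : 1 - ‖w‖ * ‖z‖ ≤ ‖1 - (starRingEnd ℂ) w * z‖ := by
    have h := norm_sub_le (1:ℂ) ((starRingEnd ℂ) w * z)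
    have h2 : ‖(1:ℂ)‖ - ‖(starRingEnd ℂ) w * z‖
        ≤ ‖1 - (starRingEnd ℂ) w * z‖ := by
      have := norm_sub_norm_le (1:ℂ) ((starRingEnd ℂ) w * z)
      simpa using this
    rw [norm_one, habs] at h2
    linarith
  refine ⟨?_, hslit, ?_, ?_⟩
  · nlinarith
  · nlinarith
  · nlinarith

lemma testF_hasDeriv {α : ℝ} {w z : ℂ} (hw : w ∈ unitDisk) (hz : z ∈ unitDisk) :
    HasDerivAt (testF α w)
      (((1:ℂ) - (‖w‖ : ℂ)^2) *
        (Complex.exp (-(α:ℂ) * Complex.log (1 - (starRingEnd ℂ) w * z)) *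
          (-(α:ℂ) * ((1 - (starRingEnd ℂ) w * z)⁻¹ * -((starRingEnd ℂ) w))))) z := by
  obtain ⟨hpos, hslit, _, _⟩ := u_facts hw hz
  have hu : HasDerivAt (fun z => 1 - (starRingEnd ℂ) w * z) (-((starRingEnd ℂ) w)) z := by
    have h1 : HasDerivAt (fun z : ℂ => (starRingEnd ℂ) w * z) ((starRingEnd ℂ) w) z := by
      simpa using (hasDerivAt_id z).const_mul ((starRingEnd ℂ) w)
    simpa using h1.const_sub 1
  have hlog : HasDerivAt (fun z => Complex.log (1 - (starRingEnd ℂ) w * z))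
      ((1 - (starRingEnd ℂ) w * z)⁻¹ * -((starRingEnd ℂ) w)) z :=
    by have := (Complex.hasDerivAt_log hslit).comp z hu; exact this
  have hmul : HasDerivAt (fun z => -(α:ℂ) * Complex.log (1 - (starRingEnd ℂ) w * z))
      (-(α:ℂ) * ((1 - (starRingEnd ℂ) w * z)⁻¹ * -((starRingEnd ℂ) w))) z := hlog.const_mul _
  exact (hmul.cexp).const_mul _

lemma testF_diff {α : ℝ} {w : ℂ} (hw : w ∈ unitDisk) :
    DifferentiableOn ℂ (testF α w) unitDisk := fun z hz =>
  ((testF_hasDeriv (α := α) hw hz).differentiableAt).differentiableWithinAt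

lemma abs_exp_neg_alpha (α : ℝ) {v : ℂ} (hv : 0 < ‖v‖) :
    ‖Complex.exp (-(α:ℂ) * Complex.log v)‖ = (‖v‖) ^ (-α) := by
  rw [Complex.norm_exp, Real.rpow_def_of_pos hv]
  congr 1
  have h : (-(α:ℂ)) = ((-α : ℝ):ℂ) := by push_cast; ring
  rw [h]
  simp [Complex.mul_re, Complex.ofReal_re, Complex.ofReal_im, Complex.log_re]
  ring

lemma testF_deriv_abs {α : ℝ} (hα : 0 < α) {w z : ℂ} (hw : w ∈ unitDisk) (hz : z ∈ unitDisk) :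
    ‖deriv (testF α w) z‖ =
      α * ‖w‖ * (1 - ‖w‖ ^ 2) *
        ((‖1 - (starRingEnd ℂ) w * z‖) ^ (-α)
          / ‖1 - (starRingEnd ℂ) w * z‖) := by
  obtain ⟨hpos, hslit, _, _⟩ := u_facts hw hz
  rw [(testF_hasDeriv hw hz).deriv]
  simp only [norm_mul, norm_neg, norm_inv]
  rw [abs_exp_neg_alpha α hpos, Complex.norm_conj]
  have h1 : ‖(1:ℂ) - (‖w‖ : ℂ)^2‖ = 1 - ‖w‖ ^ 2 := by
    have : ((1:ℂ) - (‖w‖ : ℂ)^2) = (((1 - ‖w‖ ^ 2 : ℝ)):ℂ) := by push_cast; ring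
    rw [this, Complex.norm_real, Real.norm_eq_abs, abs_of_pos (one_sub_sq_pos hw)]
  have h2 : ‖(α:ℂ)‖ = α := by
    rw [Complex.norm_real, Real.norm_eq_abs, abs_of_pos hα]
  rw [h1, h2]
  ring

lemma testF_weight_le {α : ℝ} (hα : 0 < α) {w : ℂ} (hw : w ∈ unitDisk) {z : ℂ} (hz : z ∈ unitDisk) :
    weight α (testF α w) z ≤ α * 2 ^ (α + 1) := by
  obtain ⟨hA, hslit, hA1, hA2⟩ := u_facts hw hz
  set A := ‖1 - (starRingEnd ℂ) w * z‖ with hAdef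
  rw [weight_holo hz (testF_diff hw), testF_deriv_abs hα hw hz]
  have hP : 0 < A ^ α := Real.rpow_pos_of_pos hA α
  have hneg : A ^ (-α) = (A ^ α)⁻¹ := Real.rpow_neg hA.le α
  have hX : (1 - ‖z‖ ^ 2) ^ α ≤ 2 ^ α * A ^ α := by
    rw [← Real.mul_rpow (by norm_num) hA.le]
    exact Real.rpow_le_rpow (one_sub_sq_pos hz).le hA2 hα.le
  have hw1 := abs_lt_one hw
  have hw0 := norm_nonneg w
  have hrhs : 0 ≤ α * ‖w‖ * (1 - ‖w‖ ^ 2) * (A ^ (-α) / A) := by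
    rw [hneg]
    have h1 : 0 < 1 - ‖w‖ ^ 2 := one_sub_sq_pos hw
    positivity
  calc (1 - ‖z‖ ^ 2) ^ α * (α * ‖w‖ * (1 - ‖w‖ ^ 2) * (A ^ (-α) / A))
      ≤ (2 ^ α * A ^ α) * (α * ‖w‖ * (1 - ‖w‖ ^ 2) * (A ^ (-α) / A)) :=
        mul_le_mul_of_nonneg_right hX hrhs
    _ = 2 ^ α * α * (‖w‖ * (1 - ‖w‖ ^ 2) / A) := by
        rw [hneg]; field_simp
    _ ≤ 2 ^ α * α * 2 := by
        apply mul_le_mul_of_nonneg_left _ (by positivity)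
        rw [div_le_iff₀ hA]
        have key : ‖w‖ * (1 - ‖w‖ ^ 2) ≤ 2 * (1 - ‖w‖) := by
          nlinarith [mul_nonneg hw0 hw0, sq_nonneg (1 - ‖w‖)]
        linarith
    _ = α * 2 ^ (α + 1) := by
        rw [Real.rpow_add (by norm_num : (0:ℝ) < 2), Real.rpow_one]; ring

lemma testF_at_zero {α : ℝ} {w : ℂ} (hw : w ∈ unitDisk) :
    ‖testF α w 0‖ ≤ 1 := by
  unfold testF
  simp only [mul_zero, sub_zero, Complex.log_one, mul_zero, neg_mul, zero_mul, neg_zero,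
    Complex.exp_zero, mul_one]
  have : ((1:ℂ) - (‖w‖ : ℂ)^2) = (((1 - ‖w‖ ^ 2 : ℝ)):ℂ) := by push_cast; ring
  rw [this, Complex.norm_real, Real.norm_eq_abs, abs_of_pos (one_sub_sq_pos hw)]
  nlinarith [norm_nonneg w]

lemma testF_memHB0 {α : ℝ} (hα : 0 < α) {w : ℂ} (hw : w ∈ unitDisk) :
    memHB0 α (testF α w) := by
  set b := 1 - ‖w‖ with hbdef
  have hb : 0 < b := by have := abs_lt_one hw; simp [hbdef]; linarith
  apply memHB0_of_bounded_deriv hα (testF_diff hw)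
    (D := α * (1 - ‖w‖ ^ 2) * ((b ^ α * b)⁻¹))
  intro z hz
  obtain ⟨hA, hslit, hA1, hA2⟩ := u_facts hw hz
  set A := ‖1 - (starRingEnd ℂ) w * z‖ with hAdef
  rw [testF_deriv_abs hα hw hz]
  have hneg : A ^ (-α) = (A ^ α)⁻¹ := Real.rpow_neg hA.le α
  have hPA : 0 < A ^ α := Real.rpow_pos_of_pos hA α
  have hPb : 0 < b ^ α := Real.rpow_pos_of_pos hb α
  have hmono : b ^ α * b ≤ A ^ α * A :=
    mul_le_mul (Real.rpow_le_rpow hb.le hA1 hα.le) hA1 hb.le (le_of_lt hPA)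
  have hinv : (A ^ α * A)⁻¹ ≤ (b ^ α * b)⁻¹ := by
    apply inv_anti₀ (by positivity) hmono
  have hfrac : A ^ (-α) / A = (A ^ α * A)⁻¹ := by
    rw [hneg, div_eq_mul_inv, mul_inv]
  rw [hfrac]
  have hw1 := abs_lt_one hw
  have hw0 := norm_nonneg w
  have h1 : 0 < 1 - ‖w‖ ^ 2 := one_sub_sq_pos hw
  calc α * ‖w‖ * (1 - ‖w‖ ^ 2) * (A ^ α * A)⁻¹
      ≤ α * 1 * (1 - ‖w‖ ^ 2) * (b ^ α * b)⁻¹ := by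
        apply mul_le_mul
        · apply mul_le_mul_of_nonneg_right _ h1.le
          apply mul_le_mul_of_nonneg_left hw1.le hα.le
        · exact hinv
        · positivity
        · positivity
    _ = α * (1 - ‖w‖ ^ 2) * ((b ^ α * b)⁻¹) := by ring

lemma testF_HBnorm_le {α : ℝ} (hα : 0 < α) {w : ℂ} (hw : w ∈ unitDisk) :
    HBnorm α (testF α w) ≤ 1 + α * 2 ^ (α + 1) := by
  unfold HBnorm
  have h1 := testF_at_zero (α := α) hw
  have h2 : semiNorm α (testF α w) ≤ α * 2 ^ (α + 1) := by
    apply csSup_le ((Set.nonempty_of_mem zero_mem_unitDisk).image _)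
    rintro _ ⟨z, hz, rfl⟩
    exact testF_weight_le hα hw hz
  linarith

lemma testF_at_center {α : ℝ} (hα : 0 < α) {w : ℂ} (hw : w ∈ unitDisk) :
    (1 - ‖w‖ ^ 2) ^ α * ‖deriv (testF α w) w‖ = α * ‖w‖ := by
  rw [testF_deriv_abs hα hw hw]
  have ht : 0 < 1 - ‖w‖ ^ 2 := one_sub_sq_pos hw
  have hu : (1 - (starRingEnd ℂ) w * w) = (((1 - ‖w‖ ^ 2 : ℝ)):ℂ) := by
    have : (starRingEnd ℂ) w * w = ((‖w‖ ^ 2 : ℝ):ℂ) := by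
      rw [mul_comm, Complex.mul_conj']
      push_cast; ring
    rw [this]; push_cast; ring
  rw [hu, Complex.norm_real, Real.norm_eq_abs, abs_of_pos ht]
  have hcancel : (1 - ‖w‖ ^ 2) ^ α * (1 - ‖w‖ ^ 2) ^ (-α) = 1 := by
    rw [← Real.rpow_add ht]; simp
  calc (1 - ‖w‖ ^ 2) ^ α * (α * ‖w‖ * (1 - ‖w‖ ^ 2) *
        ((1 - ‖w‖ ^ 2) ^ (-α) / (1 - ‖w‖ ^ 2)))
      = ((1 - ‖w‖ ^ 2) ^ α * (1 - ‖w‖ ^ 2) ^ (-α)) * (α * ‖w‖) *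
        ((1 - ‖w‖ ^ 2) / (1 - ‖w‖ ^ 2)) := by ring
    _ = α * ‖w‖ := by rw [hcancel, div_self (ne_of_gt ht)]; try ring

lemma semiNorm_le_HBnorm (α : ℝ) (f : ℂ → ℂ) : semiNorm α f ≤ HBnorm α f :=
  le_add_of_nonneg_left (norm_nonneg _)

/-- C_φ : HB₀(α) → HB₀(α) is bounded iff φ ∈ B₀(α) and
sup_{z∈D} (1-|z|²)^α|φ'(z)|/(1-|φ(z)|²)^α < ∞. -/
theorem comp_bounded_HB0_HB0_iff (α : ℝ) (hα : 0 < α) (φ : ℂ → ℂ)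
    (hφd : DifferentiableOn ℂ φ unitDisk) (hφm : MapsTo φ unitDisk unitDisk) :
    (∃ C > 0, ∀ f, memHB0 α f → memHB0 α (f ∘ φ) ∧ HBnorm α (f ∘ φ) ≤ C * HBnorm α f) ↔
      ((∀ ε > 0, ∃ r < (1:ℝ), ∀ z ∈ unitDisk, r < ‖z‖ →
          (1 - ‖z‖ ^ 2) ^ α * ‖deriv φ z‖ < ε) ∧
        ∃ M : ℝ, ∀ z ∈ unitDisk, tau α φ z ≤ M) := by
  constructor
  · rintro ⟨C, hC, hbdd⟩
    have hid : memHB0 α (fun z : ℂ => z) := by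
      apply memHB0_of_bounded_deriv hα differentiable_id.differentiableOn (D := 1)
      intro z _; simp
    have hφHB0 : memHB0 α φ := by
      have := (hbdd _ hid).1
      have hcomp : ((fun z : ℂ => z) ∘ φ) = φ := rfl
      rwa [hcomp] at this
    constructor
    · intro ε hε
      obtain ⟨r, hr1, hr⟩ := hφHB0.2 ε hε
      refine ⟨r, hr1, fun z hz hrz => ?_⟩
      have := hr z hz hrz
      rwa [weight_holo hz hφd] at this
    · obtain ⟨Bφ, hBφ⟩ := hφHB0.1.2
      have hBφ0 : 0 ≤ Bφ :=
        le_trans (weight_nonneg zero_mem_unitDisk) (hBφ ⟨0, zero_mem_unitDisk, rfl⟩)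
      set c34 : ℝ := (3/4 : ℝ) ^ α with hc34def
      have hc34 : 0 < c34 := Real.rpow_pos_of_pos (by norm_num) α
      set K : ℝ := 1 + α * 2 ^ (α + 1) with hKdef
      have hK0 : 0 ≤ K := by
        have : (0:ℝ) ≤ α * 2 ^ (α+1) := by positivity
        simp [hKdef]; linarith
      refine ⟨max (Bφ / c34) (2 * (C * K) / α), fun z hz => ?_⟩
      have hwz : φ z ∈ unitDisk := hφm hz
      by_cases hcase : ‖φ z‖ ≤ 1/2
      · apply le_max_of_le_left
        have hnum : (1 - ‖z‖ ^ 2) ^ α * ‖deriv φ z‖ ≤ Bφ := by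
          have := hBφ ⟨z, hz, rfl⟩
          rwa [weight_holo hz hφd] at this
        have hden : c34 ≤ (1 - ‖φ z‖ ^ 2) ^ α := by
          apply Real.rpow_le_rpow (by norm_num) _ hα.le
          nlinarith [norm_nonneg (φ z)]
        exact div_le_div₀ hBφ0 hnum hc34 hden
      · apply le_max_of_le_right
        push_neg at hcase
        set w := φ z with hwdef
        have htest := hbdd _ (testF_memHB0 hα hwz)
        have hwle : weight α (testF α w ∘ φ) z ≤ C * K := by
          calc weight α (testF α w ∘ φ) z ≤ semiNorm α (testF α w ∘ φ) :=
                weight_le_semiNorm hz htest.1.1.2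
            _ ≤ HBnorm α (testF α w ∘ φ) := semiNorm_le_HBnorm _ _
            _ ≤ C * HBnorm α (testF α w) := htest.2
            _ ≤ C * K := mul_le_mul_of_nonneg_left (testF_HBnorm_le hα hwz) hC.le
        have hkey : weight α (testF α w ∘ φ) z = tau α φ z * (α * ‖w‖) := by
          rw [weight_comp (α := α) (h := testF α w) (g := fun _ => 0) (f := testF α w) hz hφd hφm
            (testF_diff hwz) (differentiableOn_const 0) (fun x _ => by simp)]
          congr 1
          rw [weight_holo hwz (testF_diff hwz)]
          exact testF_at_center hα hwz
        rw [hkey] at hwle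
        have htau0 : 0 ≤ tau α φ z := tau_nonneg hz hwz
        rw [le_div_iff₀ hα]
        nlinarith [mul_le_mul_of_nonneg_left hcase.le (mul_nonneg htau0 hα.le), hwle]
  · rintro ⟨h1, M, hM⟩
    have hw0 : φ 0 ∈ unitDisk := hφm zero_mem_unitDisk
    set M0 : ℝ := max M 0 with hM0def
    have hM00 : 0 ≤ M0 := le_max_right M 0
    have hM0 : ∀ z ∈ unitDisk, tau α φ z ≤ M0 := fun z hz => le_max_of_le_left (hM z hz)
    set K0 : ℝ := ‖φ 0‖ / (1 - ‖φ 0‖ ^ 2) ^ α with hK0def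
    have hK00 : 0 ≤ K0 := by
      have := Real.rpow_pos_of_pos (one_sub_sq_pos hw0) α
      positivity
    refine ⟨1 + K0 + M0, by linarith, fun f hf => ?_⟩
    obtain ⟨⟨⟨h, g, hh, hg, hfe⟩, hbddf⟩, hlof⟩ := hf
    have key : ∀ z ∈ unitDisk, weight α (f ∘ φ) z = tau α φ z * weight α f (φ z) :=
      fun z hz => weight_comp hz hφd hφm hh hg hfe
    have hSf : 0 ≤ semiNorm α f := semiNorm_nonneg hbddf
    have hptwise : ∀ z ∈ unitDisk, weight α (f ∘ φ) z ≤ M0 * semiNorm α f := by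
      intro z hz
      rw [key z hz]
      exact mul_le_mul (hM0 z hz) (weight_le_semiNorm (hφm hz) hbddf)
        (weight_nonneg (hφm hz)) hM00
    have hbddc : BddAbove (weight α (f ∘ φ) '' unitDisk) :=
      ⟨M0 * semiNorm α f, by rintro _ ⟨z, hz, rfl⟩; exact hptwise z hz⟩
    have hharm : HarmonicDisk (f ∘ φ) :=
      ⟨h ∘ φ, g ∘ φ, hh.comp hφd hφm, hg.comp hφd hφm, fun x hx => hfe (φ x) (hφm hx)⟩
    have hlo : littleOh α (f ∘ φ) := by
      intro ε hε
      obtain ⟨r1, hr11, hr1⟩ := hlof (ε / (M0 + 1)) (by positivity)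
      set ρ : ℝ := max r1 0 with hρdef
      have hρ1 : ρ < 1 := max_lt hr11 one_pos
      have hρ0 : 0 ≤ ρ := le_max_right r1 0
      set c : ℝ := (1 - ρ ^ 2) ^ α with hcdef
      have hc : 0 < c := Real.rpow_pos_of_pos (by nlinarith) α
      obtain ⟨B, hB⟩ := hbddf
      have hB0 : 0 ≤ B :=
        le_trans (weight_nonneg zero_mem_unitDisk) (hB ⟨0, zero_mem_unitDisk, rfl⟩)
      obtain ⟨r2, hr21, hr2⟩ := h1 (ε * c / (2 * (B + 1))) (by positivity)
      refine ⟨r2, hr21, fun z hz hrz => ?_⟩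
      have hwz : φ z ∈ unitDisk := hφm hz
      rw [key z hz]
      by_cases hcase : ρ < ‖φ z‖
      · have hwf : weight α f (φ z) < ε / (M0 + 1) :=
          hr1 (φ z) hwz (lt_of_le_of_lt (le_max_left r1 0) hcase)
        calc tau α φ z * weight α f (φ z) ≤ M0 * weight α f (φ z) :=
              mul_le_mul_of_nonneg_right (hM0 z hz) (weight_nonneg hwz)
          _ ≤ M0 * (ε / (M0 + 1)) := mul_le_mul_of_nonneg_left hwf.le hM00
          _ < ε := by
              rw [mul_div_assoc', div_lt_iff₀ (by positivity)]
              nlinarith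
      · push_neg at hcase
        have hdz : 0 < (1 - ‖φ z‖ ^ 2) ^ α :=
          Real.rpow_pos_of_pos (one_sub_sq_pos hwz) α
        have hcc : c ≤ (1 - ‖φ z‖ ^ 2) ^ α := by
          apply Real.rpow_le_rpow (by nlinarith) _ hα.le
          nlinarith [norm_nonneg (φ z)]
        have hW : weight α f (φ z) ≤ B := hB ⟨φ z, hwz, rfl⟩
        have hN : (1 - ‖z‖ ^ 2) ^ α * ‖deriv φ z‖
            < ε * c / (2 * (B + 1)) := hr2 z hz hrz
        have hNn : 0 ≤ (1 - ‖z‖ ^ 2) ^ α * ‖deriv φ z‖ := by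
          have := one_sub_sq_pos hz
          positivity
        calc tau α φ z * weight α f (φ z)
            = ((1 - ‖z‖ ^ 2) ^ α * ‖deriv φ z‖)
                * (weight α f (φ z) / (1 - ‖φ z‖ ^ 2) ^ α) := by
              unfold tau; ring
          _ ≤ ((1 - ‖z‖ ^ 2) ^ α * ‖deriv φ z‖) * (B / c) :=
              mul_le_mul_of_nonneg_left (div_le_div₀ hB0 hW hc hcc) hNn
          _ ≤ (ε * c / (2 * (B + 1))) * (B / c) :=
              mul_le_mul_of_nonneg_right hN.le (by positivity)
          _ < ε := by
              have heq : (ε * c / (2 * (B + 1))) * (B / c) = ε * B / (2 * (B + 1)) := by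
                field_simp
              rw [heq, div_lt_iff₀ (by positivity)]
              nlinarith
    refine ⟨⟨⟨hharm, hbddc⟩, hlo⟩, ?_⟩
    have hsemi : semiNorm α (f ∘ φ) ≤ M0 * semiNorm α f := by
      apply csSup_le ((Set.nonempty_of_mem zero_mem_unitDisk).image _)
      rintro _ ⟨z, hz, rfl⟩
      exact hptwise z hz
    have hval : ‖(f ∘ φ) 0‖ ≤ ‖f 0‖ + semiNorm α f * K0 := by
      have := growth_bound hα hh hg hfe hbddf hw0
      have heq : semiNorm α f * ‖φ 0‖ / (1 - ‖φ 0‖ ^ 2) ^ α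
          = semiNorm α f * K0 := by rw [hK0def]; ring
      calc ‖(f ∘ φ) 0‖ = ‖f (φ 0)‖ := rfl
        _ ≤ ‖f 0‖ + semiNorm α f * ‖φ 0‖
              / (1 - ‖φ 0‖ ^ 2) ^ α := this
        _ = ‖f 0‖ + semiNorm α f * K0 := by rw [heq]
    have habs0 : 0 ≤ ‖f 0‖ := norm_nonneg _
    unfold HBnorm at *
    nlinarith [hsemi, hval, habs0, hSf, hK00, hM00]
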